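/- Let Ω be a finite set, u : Ω → ℝ, K > 0, Λ > 0, and let p ∈ Δ(Ω) have full support. Then the function q ↦ Σ_ω u(ω)q(ω) − (1/K)·Σ_ω q(ω)·(ln q(ω) − Λ·ln p(ω)) on Δ(Ω) attains its maximum uniquely at q* given by q*(ω) = e^{K·u(ω)}·p(ω)^Λ / Σ_{ω'} e^{K·u(ω')}·p(ω')^Λ. Consequently the solution map p ↦ q* of the motivated beliefs problem with Λ-KL costs and utilities u is the power-weighted distortion function with weights ψ(ω) = e^{K·u(ω)} and power α = Λ. -/

import Mathlib

open Finset

/-- `p` is a probability distribution on the finite set `Ω`. -/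
def IsDist {Ω : Type*} [Fintype Ω] (p : Ω → ℝ) : Prop :=
  (∀ ω, 0 ≤ p ω) ∧ ∑ ω, p ω = 1

/-- The objective of the motivated-beliefs problem with `Λ`-KL costs and utilities `u`:
`u·q − (1/K)·Σ_ω q(ω)(ln q(ω) − Λ ln p(ω))` (with the convention `0·ln 0 = 0`,
which holds automatically since `Real.log 0 = 0`). -/
noncomputable def mbObjective {Ω : Type*} [Fintype Ω]
    (u : Ω → ℝ) (K Lam : ℝ) (p q : Ω → ℝ) : ℝ :=
  (∑ ω, u ω * q ω) -
    (1 / K) * ∑ ω, q ω * (Real.log (q ω) - Lam * Real.log (p ω))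

/-- **Proposition**: the motivated-beliefs problem with `Λ`-KL costs and utilities `u`
has the unique solution `q*(ω) = e^{K·u(ω)}·p(ω)^Λ / Σ_{ω'} e^{K·u(ω')}·p(ω')^Λ`; hence
the solution map is the power-weighted distortion with weights `ψ(ω) = e^{K·u(ω)}` and
power `α = Λ`. -/
lemma term_lt (w Z q : ℝ) (hw : 0 < w) (hZ : 0 < Z) (hq : 0 ≤ q) (hne : q ≠ w / Z) :
    q * (Real.log w - Real.log q) < w / Z - q + q * Real.log Z := by
  rcases hq.eq_or_lt with h | h
  · simp only [← h]
    have : 0 < w / Z := div_pos hw hZ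
    simpa using this
  · have hx : 0 < w / (Z * q) := div_pos hw (mul_pos hZ h)
    have hx1 : w / (Z * q) ≠ 1 := by
      intro h1
      apply hne
      field_simp at h1 ⊢
      linarith [h1]
    have hlog : Real.log (w / (Z * q)) < w / (Z * q) - 1 :=
      Real.log_lt_sub_one_of_pos hx hx1
    have hlogeq : Real.log (w / (Z * q)) = Real.log w - Real.log Z - Real.log q := by
      rw [Real.log_div hw.ne' (mul_pos hZ h).ne', Real.log_mul hZ.ne' h.ne']
      ring
    have hqx : q * (w / (Z * q)) = w / Z := by field_simp
    nlinarith [mul_lt_mul_of_pos_left hlog h]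

lemma term_le (w Z q : ℝ) (hw : 0 < w) (hZ : 0 < Z) (hq : 0 ≤ q) :
    q * (Real.log w - Real.log q) ≤ w / Z - q + q * Real.log Z := by
  by_cases hne : q = w / Z
  · subst hne
    rw [Real.log_div hw.ne' hZ.ne']
    ring_nf
    exact le_rfl
  · exact (term_lt w Z q hw hZ hq hne).le

theorem stmt12 {Ω : Type*} [Fintype Ω]
    (u : Ω → ℝ) (K Lam : ℝ) (hK : 0 < K) (hLam : 0 < Lam)
    (p : Ω → ℝ) (hp : IsDist p) (hfull : ∀ ω, 0 < p ω)
    (qstar : Ω → ℝ)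
    (hqstar : ∀ ω, qstar ω =
      Real.exp (K * u ω) * p ω ^ Lam / ∑ ω', Real.exp (K * u ω') * p ω' ^ Lam) :
    IsDist qstar ∧
      (∀ q, IsDist q → mbObjective u K Lam p q ≤ mbObjective u K Lam p qstar) ∧
      (∀ q, IsDist q → mbObjective u K Lam p q = mbObjective u K Lam p qstar →
        q = qstar) := by
  have hΩ : Nonempty Ω := by
    by_contra h
    rw [not_nonempty_iff] at h
    have := hp.2
    simp [Finset.univ_eq_empty] at this
  set w : Ω → ℝ := fun ω => Real.exp (K * u ω) * p ω ^ Lam with hw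
  have hwpos : ∀ ω, 0 < w ω := fun ω =>
    mul_pos (Real.exp_pos _) (Real.rpow_pos_of_pos (hfull ω) _)
  set Z : ℝ := ∑ ω, w ω with hZdef
  have hZpos : 0 < Z := Finset.sum_pos (fun ω _ => hwpos ω) univ_nonempty
  have hq' : ∀ ω, qstar ω = w ω / Z := hqstar
  have hlogw : ∀ ω, Real.log (w ω) = K * u ω + Lam * Real.log (p ω) := by
    intro ω
    rw [hw, Real.log_mul (Real.exp_pos _).ne' (Real.rpow_pos_of_pos (hfull ω) _).ne',
      Real.log_exp, Real.log_rpow (hfull ω)]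
  -- objective identity
  have hobj : ∀ q : Ω → ℝ, K * mbObjective u K Lam p q =
      ∑ ω, q ω * (Real.log (w ω) - Real.log (q ω)) := by
    intro q
    have h1 : K * mbObjective u K Lam p q =
        (∑ ω, K * (u ω * q ω)) - ∑ ω, q ω * (Real.log (q ω) - Lam * Real.log (p ω)) := by
      rw [mbObjective, ← Finset.mul_sum]
      field_simp
    rw [h1, ← Finset.sum_sub_distrib]
    refine Finset.sum_congr rfl fun ω _ => ?_
    rw [hlogw ω]; ring
  -- value at qstar
  have hGstar : ∑ ω, qstar ω * (Real.log (w ω) - Real.log (qstar ω)) = Real.log Z := by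
    have : ∀ ω, qstar ω * (Real.log (w ω) - Real.log (qstar ω)) = qstar ω * Real.log Z := by
      intro ω
      rw [hq' ω, Real.log_div (hwpos ω).ne' hZpos.ne']
      ring
    rw [Finset.sum_congr rfl (fun ω _ => this ω), ← Finset.sum_mul]
    have hsum : ∑ ω, qstar ω = 1 := by
      simp only [hq', ← Finset.sum_div]
      exact div_self hZpos.ne'
    rw [hsum, one_mul]
  have hdistq : IsDist qstar := by
    constructor
    · intro ω; rw [hq' ω]; exact (div_pos (hwpos ω) hZpos).le
    · simp only [hq', ← Finset.sum_div]
      exact div_self hZpos.ne'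
  -- bound for arbitrary dist
  have hbound : ∀ q : Ω → ℝ, IsDist q →
      ∑ ω, (w ω / Z - q ω + q ω * Real.log Z) = Real.log Z := by
    intro q hq
    rw [Finset.sum_add_distrib, Finset.sum_sub_distrib, ← Finset.sum_div,
      ← Finset.sum_mul, hq.2, ← hZdef, div_self hZpos.ne']
    ring
  refine ⟨hdistq, ?_, ?_⟩
  · intro q hq
    have h1 : ∑ ω, q ω * (Real.log (w ω) - Real.log (q ω)) ≤ Real.log Z := by
      calc ∑ ω, q ω * (Real.log (w ω) - Real.log (q ω))
          ≤ ∑ ω, (w ω / Z - q ω + q ω * Real.log Z) :=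
            Finset.sum_le_sum fun ω _ => term_le (w ω) Z (q ω) (hwpos ω) hZpos (hq.1 ω)
        _ = Real.log Z := hbound q hq
    have := hobj q; have h2 := hobj qstar
    rw [hGstar] at h2
    have : K * mbObjective u K Lam p q ≤ K * mbObjective u K Lam p qstar := by
      rw [this, h2]; exact h1
    exact le_of_mul_le_mul_left this hK
  · intro q hq heq
    by_contra hne
    push_neg at hne
    obtain ⟨ω₀, hω₀⟩ := Function.ne_iff.mp hne
    have hstrict : ∑ ω, q ω * (Real.log (w ω) - Real.log (q ω)) <
        ∑ ω, (w ω / Z - q ω + q ω * Real.log Z) := by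
      refine Finset.sum_lt_sum
        (fun ω _ => term_le (w ω) Z (q ω) (hwpos ω) hZpos (hq.1 ω))
        ⟨ω₀, Finset.mem_univ _, ?_⟩
      exact term_lt (w ω₀) Z (q ω₀) (hwpos ω₀) hZpos (hq.1 ω₀) (by rw [← hq' ω₀]; exact hω₀)
    rw [hbound q hq] at hstrict
    have h2 := hobj qstar
    rw [hGstar] at h2
    have h1 := hobj q
    rw [heq, h2] at h1
    exact absurd h1.symm hstrict.ne
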